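/- Let a, c be real numbers with c not a nonpositive integer, and let m, n be positive integers with m ≥ n - 1. If a < c < 1 - m - n, then all n zeros of the polynomial Q_{mn}(z) = ₂F₁(-n, -a-m; -c-m-n+1; z) are real and simple and lie in the open interval (0, 1). -/

import Mathlib

/-- The Pochhammer symbol `(x)_k = x (x+1) ⋯ (x+k-1)` for a real number `x`. -/
noncomputable def poch (x : ℝ) (k : ℕ) : ℝ := ∏ i ∈ Finset.range k, (x + i)

/-- The terminating Gauss hypergeometric polynomial `₂F₁(-n, b; d; z)`
    as a real polynomial in `z`. -/
noncomputable def hypPoly (n : ℕ) (b d : ℝ) : Polynomial ℝ :=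
  ∑ k ∈ Finset.range (n + 1),
    Polynomial.C ((poch (-(n : ℝ)) k * poch b k) / (poch d k * (Nat.factorial k))) *
      Polynomial.X ^ k

/-- The denominator polynomial `Q_{mn}(z) = ₂F₁(-n, -a-m; -c-m-n+1; z)` of the
`[m/n]` Padé approximant for `₂F₁(a, 1; c; z)`. -/
noncomputable def padeDenom (m n : ℕ) (a c : ℝ) : Polynomial ℝ :=
  hypPoly n (-a - m) (-c - m - n + 1)

lemma poch_zero (x : ℝ) : poch x 0 = 1 := by simp [poch]

lemma poch_succ (x : ℝ) (k : ℕ) : poch x (k+1) = poch x k * (x + k) := by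
  simp [poch, Finset.prod_range_succ]

lemma poch_shift (x : ℝ) (k : ℕ) : poch x (k+1) = x * poch (x+1) k := by
  unfold poch
  rw [Finset.prod_range_succ']
  rw [mul_comm]
  congr 1
  · norm_num
  · apply Finset.prod_congr rfl; intro i _; push_cast; ring

lemma poch_eq_zero_of_lt (n j : ℕ) (h : n < j) : poch (-(n:ℝ)) j = 0 := by
  apply Finset.prod_eq_zero (Finset.mem_range.mpr h)
  simp

lemma poch_pos {x : ℝ} (k : ℕ) (h : ∀ i : ℕ, i < k → 0 < x + i) : 0 < poch x k := by
  apply Finset.prod_pos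
  intro i hi
  exact h i (Finset.mem_range.mp hi)

lemma poch_ne_zero {x : ℝ} (k : ℕ) (h : ∀ i : ℕ, i < k → x + i ≠ 0) : poch x k ≠ 0 := by
  apply Finset.prod_ne_zero_iff.mpr
  intro i hi
  exact h i (Finset.mem_range.mp hi)

lemma hypPoly_coeff (n : ℕ) (b d : ℝ) (j : ℕ) :
    (hypPoly n b d).coeff j = poch (-(n:ℝ)) j * poch b j / (poch d j * (Nat.factorial j)) := by
  unfold hypPoly
  rw [Polynomial.finset_sum_coeff]
  by_cases hj : j ≤ n
  · rw [Finset.sum_eq_single j]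
    · simp
    · intro k _ hk
      simp [Polynomial.coeff_C_mul, Polynomial.coeff_X_pow, hk, Ne.symm hk]
    · intro h
      exact absurd (Finset.mem_range.mpr (Nat.lt_succ_of_le hj)) h
  · push_neg at hj
    rw [poch_eq_zero_of_lt n j hj]
    rw [Finset.sum_eq_zero]
    · simp
    · intro k hk
      have hk' : k < n + 1 := Finset.mem_range.mp hk
      have : j ≠ k := by omega
      simp [Polynomial.coeff_C_mul, Polynomial.coeff_X_pow, this]
lemma coeff_id (k : ℕ) (a c : ℝ) (hc1 : c - 1 ≠ 0) (hden : ∀ i : ℕ, i ≤ k → c + i ≠ 0)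
    (i : ℕ) :
    ((i:ℝ) + 1 + c - 1) * (hypPoly k a c).coeff (i+1)
      - ((i:ℝ) + a - 1 - k) * (hypPoly k a c).coeff i
    = (c - 1) * (hypPoly (k+1) (a-1) (c-1)).coeff (i+1) := by
  rw [hypPoly_coeff, hypPoly_coeff, hypPoly_coeff]
  by_cases hi : i ≤ k
  · have e1 : poch (-(k:ℝ)) (i+1) = poch (-(k:ℝ)) i * (-(k:ℝ) + i) := poch_succ _ _
    have e2 : poch a (i+1) = poch a i * (a + i) := poch_succ _ _
    have e3 : poch c (i+1) = poch c i * (c + i) := poch_succ _ _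
    have e4 : poch (-((k:ℝ)+1)) (i+1) = (-((k:ℝ)+1)) * poch (-(k:ℝ)) i := by
      rw [poch_shift]
      congr 1
      ring
    have e4' : poch (-(((k+1):ℕ):ℝ)) (i+1) = (-((k:ℝ)+1)) * poch (-(k:ℝ)) i := by
      rw [← e4]; congr 1; push_cast; ring
    have e5 : poch (a-1) (i+1) = (a-1) * poch a i := by
      rw [poch_shift]; congr 1; ring
    have e6 : poch (c-1) (i+1) = (c-1) * poch c i := by
      rw [poch_shift]; congr 1; ring
    have e7 : ((Nat.factorial (i+1) : ℕ) : ℝ) = ((i:ℝ)+1) * (Nat.factorial i : ℝ) := by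
      rw [Nat.factorial_succ]; push_cast; ring
    rw [e1, e2, e3, e4', e5, e6, e7]
    have h3 : poch c i ≠ 0 := by
      apply poch_ne_zero
      intro t ht
      exact hden t (le_of_lt (lt_of_lt_of_le ht hi))
    have h4 : c + (i:ℝ) ≠ 0 := hden i hi
    have h5 : ((Nat.factorial i : ℕ) : ℝ) ≠ 0 := by
      exact_mod_cast Nat.factorial_ne_zero i
    have h6 : ((i:ℝ) + 1) ≠ 0 := by positivity
    field_simp
    ring
  · push_neg at hi
    rw [poch_eq_zero_of_lt k i hi, poch_eq_zero_of_lt k (i+1) (by omega)]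
    rw [poch_eq_zero_of_lt (k+1) (i+1) (by omega)]
    simp

lemma key_identity (k : ℕ) (a c : ℝ) (hc1 : c - 1 ≠ 0) (hden : ∀ i : ℕ, i ≤ k → c + i ≠ 0) :
    Polynomial.X * (1 - Polynomial.X) * (Polynomial.derivative (hypPoly k a c))
      + (Polynomial.C (c-1) * (1 - Polynomial.X) - Polynomial.C (a - c - k) * Polynomial.X)
          * hypPoly k a c
    = Polynomial.C (c-1) * hypPoly (k+1) (a-1) (c-1) := by
  have expand : Polynomial.X * (1 - Polynomial.X) * (Polynomial.derivative (hypPoly k a c))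
      + (Polynomial.C (c-1) * (1 - Polynomial.X) - Polynomial.C (a - c - k) * Polynomial.X)
          * hypPoly k a c
    = (Polynomial.X * (Polynomial.derivative (hypPoly k a c))
        - Polynomial.X * (Polynomial.X * (Polynomial.derivative (hypPoly k a c))))
      + (Polynomial.C (c-1) * hypPoly k a c
          - Polynomial.X * (Polynomial.C (c-1) * hypPoly k a c)
          - Polynomial.X * (Polynomial.C (a - c - k) * hypPoly k a c)) := by ring
  rw [expand]
  apply Polynomial.ext
  intro j
  match j with
  | 0 =>
    simp only [Polynomial.coeff_add, Polynomial.coeff_sub, Polynomial.mul_coeff_zero,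
      Polynomial.coeff_X_zero, Polynomial.coeff_C_mul, zero_mul, mul_zero, sub_zero, zero_sub]
    rw [hypPoly_coeff, hypPoly_coeff]
    simp [poch_zero]
  | 1 =>
    simp only [Polynomial.coeff_add, Polynomial.coeff_sub, Polynomial.coeff_C_mul]
    rw [show (1:ℕ) = 0 + 1 from rfl]
    rw [Polynomial.coeff_X_mul, Polynomial.coeff_X_mul, Polynomial.coeff_X_mul,
      Polynomial.coeff_X_mul]
    simp only [Polynomial.mul_coeff_zero, Polynomial.coeff_X_zero, zero_mul,
      Polynomial.coeff_C_mul, Polynomial.coeff_derivative, Polynomial.coeff_C_zero]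
    have := coeff_id k a c hc1 hden 0
    push_cast at this ⊢
    linarith [this]
  | (i+2) =>
    simp only [Polynomial.coeff_add, Polynomial.coeff_sub, Polynomial.coeff_C_mul]
    rw [Polynomial.coeff_X_mul, Polynomial.coeff_X_mul, Polynomial.coeff_X_mul,
      Polynomial.coeff_X_mul, Polynomial.coeff_X_mul]
    simp only [Polynomial.coeff_derivative, Polynomial.coeff_C_mul, Polynomial.coeff_C_zero]
    have h1 := coeff_id k a c hc1 hden (i+1)
    have h2 := coeff_id k a c hc1 hden i
    push_cast at h1 h2 ⊢
    linarith [h1, h2]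
lemma rolle_aux (f : ℝ → ℝ) (hf : Continuous f) :
    ∀ (l : List ℝ) (x : ℝ), List.Chain (· < ·) x l → f x = 0 → (∀ y ∈ l, f y = 0) →
    ∃ U : Finset ℝ, U.card = l.length ∧ ∀ u ∈ U,
      x < u ∧ deriv f u = 0 ∧ ∃ z ∈ l, u < z := by
  intro l
  induction l with
  | nil => intro x _ _ _; exact ⟨∅, by simp, by simp⟩
  | cons y t ih =>
    intro x hchain hfx hfl
    obtain ⟨hxy, hchain'⟩ := List.chain_cons.mp hchain
    have hfy : f y = 0 := hfl y (by simp)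
    obtain ⟨c, hc, hdc⟩ := exists_deriv_eq_zero hxy hf.continuousOn (by rw [hfx, hfy])
    obtain ⟨U', hcard, hU'⟩ := ih y hchain' hfy (fun z hz => hfl z (by simp [hz]))
    have hcU' : c ∉ U' := fun h => absurd ((hU' c h).1) (not_lt.mpr (le_of_lt hc.2))
    refine ⟨insert c U', ?_, ?_⟩
    · rw [Finset.card_insert_of_notMem hcU', hcard]; simp
    · intro u hu
      rcases Finset.mem_insert.mp hu with rfl | hu'
      · exact ⟨hc.1, hdc, y, by simp, hc.2⟩
      · obtain ⟨h1, h2, z, hz, h3⟩ := hU' u hu'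
        exact ⟨lt_trans hxy h1, h2, z, by simp [hz], h3⟩
lemma step_lemma (k : ℕ) (a c : ℝ)
    (hp : 0 < c - 1) (hq : 0 < a - c - k)
    (hden : ∀ i : ℕ, i ≤ k → c + (i:ℝ) ≠ 0)
    (S : Finset ℝ) (hcard : S.card = k) (hS : ∀ x ∈ S, x ∈ Set.Ioo (0:ℝ) 1)
    (hroot : ∀ x ∈ S, (hypPoly k a c).eval x = 0) :
    ∃ S' : Finset ℝ, S'.card = k+1 ∧ (∀ x ∈ S', x ∈ Set.Ioo (0:ℝ) 1) ∧
      ∀ x ∈ S', (hypPoly (k+1) (a-1) (c-1)).eval x = 0 := by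
  set p := c - 1 with hpdef
  set q := a - c - (k:ℝ) with hqdef
  set F := hypPoly k a c with hFdef
  set f : ℝ → ℝ := fun z => z ^ p * (1 - z) ^ q * Polynomial.eval z F with hfdef
  -- continuity
  have c1 : Continuous fun z : ℝ => z ^ p :=
    continuous_iff_continuousAt.mpr fun x => Real.continuousAt_rpow_const x p (Or.inr hp.le)
  have c2 : Continuous fun z : ℝ => (1 - z) ^ q := by
    have h1 : Continuous fun z : ℝ => (1:ℝ) - z := continuous_const.sub continuous_id
    have h2 : Continuous fun w : ℝ => w ^ q :=
      continuous_iff_continuousAt.mpr fun x => Real.continuousAt_rpow_const x q (Or.inr hq.le)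
    exact h2.comp h1
  have hfcont : Continuous f := (c1.mul c2).mul F.continuous_aeval
  -- the finite set of zeros
  have h0S : (0:ℝ) ∉ S := fun h => absurd (hS 0 h).1 (lt_irrefl 0)
  have h1S : (1:ℝ) ∉ S := fun h => absurd (hS 1 h).2 (lt_irrefl 1)
  set T : Finset ℝ := insert 0 (insert 1 S) with hTdef
  have hTcard : T.card = k + 2 := by
    rw [hTdef, Finset.card_insert_of_notMem, Finset.card_insert_of_notMem h1S, hcard]
    simp [h0S]
  have hTzero : ∀ z ∈ T, f z = 0 := by
    intro z hz
    rcases Finset.mem_insert.mp hz with rfl | hz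
    · simp [hfdef, Real.zero_rpow hp.ne']
    rcases Finset.mem_insert.mp hz with rfl | hz
    · simp [hfdef, Real.zero_rpow hq.ne']
    · simp [hfdef, hroot z hz]
  have hT01 : ∀ z ∈ T, 0 ≤ z ∧ z ≤ 1 := by
    intro z hz
    rcases Finset.mem_insert.mp hz with rfl | hz
    · norm_num
    rcases Finset.mem_insert.mp hz with rfl | hz
    · norm_num
    · exact ⟨(hS z hz).1.le, (hS z hz).2.le⟩
  -- sorted list
  have hlen : (T.sort (· ≤ ·)).length = k + 2 := by rw [Finset.length_sort, hTcard]
  have hmem : ∀ z, z ∈ T.sort (· ≤ ·) ↔ z ∈ T := fun z => Finset.mem_sort _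
  have hchain : (T.sort (· ≤ ·)).Chain' (· < ·) :=
    List.isChain_iff_pairwise.mpr (List.sortedLT_iff_pairwise.mp (Finset.sortedLT_sort T))
  obtain ⟨x, t, hxt⟩ : ∃ x t, T.sort (· ≤ ·) = x :: t := by
    cases h : T.sort (· ≤ ·) with
    | nil => rw [h] at hlen; simp at hlen
    | cons x t => exact ⟨x, t, rfl⟩
  rw [hxt] at hlen hmem hchain
  have htlen : t.length = k + 1 := by simpa using hlen
  have hchain2 : List.Chain (· < ·) x t := hchain
  obtain ⟨U, hUcard, hU⟩ := rolle_aux f hfcont t x hchain2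
    (hTzero x ((hmem x).mp (by simp)))
    (fun y hy => hTzero y ((hmem y).mp (by simp [hy])))
  have hUIoo : ∀ u ∈ U, u ∈ Set.Ioo (0:ℝ) 1 := by
    intro u hu
    obtain ⟨hxu, _, z, hz, huz⟩ := hU u hu
    have hx0 : 0 ≤ x := (hT01 x ((hmem x).mp (by simp))).1
    have hz1 : z ≤ 1 := (hT01 z ((hmem z).mp (by simp [hz]))).2
    exact ⟨lt_of_le_of_lt hx0 hxu, lt_of_lt_of_le huz hz1⟩
  refine ⟨U, by rw [hUcard, htlen], hUIoo, ?_⟩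
  intro u hu
  obtain ⟨hu0, hu1⟩ := hUIoo u hu
  obtain ⟨_, hderiv, _⟩ := hU u hu
  -- compute the derivative
  have d1 : HasDerivAt (fun z : ℝ => z ^ p) (p * u ^ (p - 1)) u :=
    Real.hasDerivAt_rpow_const (Or.inl hu0.ne')
  have d2 : HasDerivAt (fun z : ℝ => (1 - z) ^ q) (-(q * (1 - u) ^ (q - 1))) u := by
    have inner : HasDerivAt (fun z : ℝ => 1 - z) (-1) u := by
      simpa using (hasDerivAt_id u).const_sub 1
    have outer : HasDerivAt (fun w : ℝ => w ^ q) (q * (1 - u) ^ (q - 1)) (1 - u) :=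
      Real.hasDerivAt_rpow_const (Or.inl (by linarith))
    have := outer.comp u inner
    simpa [Function.comp_def] using this
  have d3 : HasDerivAt (fun z : ℝ => Polynomial.eval z F)
      ((Polynomial.derivative F).eval u) u := F.hasDerivAt u
  have dfull : HasDerivAt f
      ((p * u ^ (p - 1) * (1 - u) ^ q + u ^ p * -(q * (1 - u) ^ (q - 1))) * Polynomial.eval u F
        + u ^ p * (1 - u) ^ q * (Polynomial.derivative F).eval u) u := (d1.mul d2).mul d3
  have hval : (p * u ^ (p - 1) * (1 - u) ^ q + u ^ p * -(q * (1 - u) ^ (q - 1)))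
        * Polynomial.eval u F
      + u ^ p * (1 - u) ^ q * (Polynomial.derivative F).eval u = 0 := by
    rw [← dfull.deriv]; exact hderiv
  have e1 : u ^ p = u ^ (p - 1) * u := by
    calc u ^ p = u ^ (p - 1 + 1) := by norm_num
    _ = u ^ (p - 1) * u ^ (1:ℝ) := Real.rpow_add hu0 _ _
    _ = u ^ (p - 1) * u := by rw [Real.rpow_one]
  have e2 : (1 - u) ^ q = (1 - u) ^ (q - 1) * (1 - u) := by
    calc (1 - u) ^ q = (1 - u) ^ (q - 1 + 1) := by norm_num
    _ = (1 - u) ^ (q - 1) * (1 - u) ^ (1:ℝ) := Real.rpow_add (by linarith) _ _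
    _ = (1 - u) ^ (q - 1) * (1 - u) := by rw [Real.rpow_one]
  set A := u ^ (p - 1) with hA
  set B := (1 - u) ^ (q - 1) with hB
  have hval2 : A * B * ((p * (1 - u) - q * u) * Polynomial.eval u F
      + u * (1 - u) * (Polynomial.derivative F).eval u) = 0 := by
    rw [← hval, e1, e2]; ring
  have hApos : 0 < A := Real.rpow_pos_of_pos hu0 _
  have hBpos : 0 < B := Real.rpow_pos_of_pos (by linarith) _
  have hbr : (p * (1 - u) - q * u) * Polynomial.eval u F
      + u * (1 - u) * (Polynomial.derivative F).eval u = 0 := by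
    rcases mul_eq_zero.mp hval2 with h | h
    · exact absurd h (by positivity)
    · exact h
  -- use the key identity
  have hkey := key_identity k a c hp.ne' hden
  have hkeyu := congrArg (Polynomial.eval u) hkey
  simp only [Polynomial.eval_add, Polynomial.eval_mul, Polynomial.eval_sub, Polynomial.eval_X,
    Polynomial.eval_one, Polynomial.eval_C] at hkeyu
  have : (c - 1) * (hypPoly (k+1) (a-1) (c-1)).eval u = 0 := by
    rw [← hkeyu, ← hFdef]
    rw [← hbr]
    ring
  rcases mul_eq_zero.mp this with h | h
  · exact absurd h hp.ne'
  · exact h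

/-- If `a < c < 1 - m - n`, all `n` zeros of `Q_{mn}` are real, simple and lie in
`(0, 1)`. -/
theorem pade_poles_6 (a c : ℝ) (hc : ∀ k : ℕ, c ≠ -(k : ℝ))
    (m n : ℕ) (hm : 0 < m) (hn : 0 < n) (hmn : n - 1 ≤ m)
    (hac : a < c) (hc1 : c < 1 - m - n) :
    ∃ S : Finset ℝ, S.card = n ∧ (∀ x ∈ S, x ∈ Set.Ioo (0 : ℝ) 1) ∧
      ((padeDenom m n a c).map (algebraMap ℝ ℂ)).roots = S.val.map (fun x => (x : ℂ)) := by
  have main : ∀ k : ℕ, k ≤ n → ∃ S : Finset ℝ, S.card = k ∧ (∀ x ∈ S, x ∈ Set.Ioo (0:ℝ) 1) ∧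
      ∀ x ∈ S, (hypPoly k (-a - m + n - k) (-c - m + 1 - k)).eval x = 0 := by
    intro k
    induction k with
    | zero => intro _; exact ⟨∅, by simp, by simp, by simp⟩
    | succ k ih =>
      intro hk1
      obtain ⟨S, hScard, hSIoo, hSroot⟩ := ih (by omega)
      have hkn : ((k:ℝ) + 1) ≤ (n:ℝ) := by exact_mod_cast hk1
      have hp : 0 < (-c - (m:ℝ) + 1 - k) - 1 := by linarith
      have hq : 0 < (-a - (m:ℝ) + n - k) - (-c - (m:ℝ) + 1 - k) - k := by linarith
      have hden : ∀ i : ℕ, i ≤ k → (-c - (m:ℝ) + 1 - k) + (i:ℝ) ≠ 0 := by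
        intro i hi
        have hi' : (0:ℝ) ≤ i := Nat.cast_nonneg i
        have hik : (i:ℝ) ≤ k := by exact_mod_cast hi
        have : 0 < (-c - (m:ℝ) + 1 - k) + (i:ℝ) := by linarith
        exact this.ne'
      obtain ⟨S', hS'card, hS'Ioo, hS'root⟩ :=
        step_lemma k (-a - m + n - k) (-c - m + 1 - k) hp hq hden S hScard hSIoo hSroot
      refine ⟨S', hS'card, hS'Ioo, ?_⟩
      intro x hx
      have := hS'root x hx
      rw [show (-a - (m:ℝ) + n - k - 1) = -a - m + n - ((k:ℕ)+1:ℕ) by push_cast; ring,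
        show (-c - (m:ℝ) + 1 - k - 1) = -c - m + 1 - ((k:ℕ)+1:ℕ) by push_cast; ring] at this
      exact this
  obtain ⟨S, hScard, hSIoo, hSroot⟩ := main n le_rfl
  have hPeq : padeDenom m n a c = hypPoly n (-a - m + n - n) (-c - m + 1 - n) := by
    unfold padeDenom
    congr 1 <;> push_cast <;> ring
  set P := padeDenom m n a c with hPdef
  have hcoeffn : P.coeff n ≠ 0 := by
    rw [hPdef]
    unfold padeDenom
    rw [hypPoly_coeff]
    have h1 : poch (-(n:ℝ)) n ≠ 0 := by
      apply poch_ne_zero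
      intro i hi
      have : (i:ℝ) < n := by exact_mod_cast hi
      intro h; linarith [h]
    have h2 : 0 < poch (-a - m) n := by
      apply poch_pos
      intro i hi
      have : (0:ℝ) ≤ i := Nat.cast_nonneg i
      have hnn : (1:ℝ) ≤ n := by exact_mod_cast hn
      linarith
    have h3 : 0 < poch (-c - m - n + 1) n := by
      apply poch_pos
      intro i hi
      have : (0:ℝ) ≤ i := Nat.cast_nonneg i
      linarith
    have h4 : ((Nat.factorial n : ℕ) : ℝ) ≠ 0 := by exact_mod_cast Nat.factorial_ne_zero n
    exact div_ne_zero (mul_ne_zero h1 h2.ne') (mul_ne_zero h3.ne' h4)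
  have hdegle : P.natDegree ≤ n := by
    rw [hPdef]; unfold padeDenom hypPoly
    apply Polynomial.natDegree_sum_le_of_forall_le
    intro k hk
    refine le_trans (Polynomial.natDegree_C_mul_le _ _) ?_
    rw [Polynomial.natDegree_X_pow]
    exact Nat.lt_succ_iff.mp (Finset.mem_range.mp hk)
  have hdeg : P.natDegree = n := le_antisymm hdegle (Polynomial.le_natDegree_of_ne_zero hcoeffn)
  have hP0 : P ≠ 0 := fun h => hcoeffn (by rw [h]; simp)
  have hroots : ∀ x ∈ S, x ∈ P.roots := by
    intro x hx
    refine (Polynomial.mem_roots hP0).mpr ?_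
    show Polynomial.eval x P = 0
    rw [hPeq]
    exact hSroot x hx
  have hle : S.val ≤ P.roots := by
    rw [Multiset.le_iff_count]
    intro x
    by_cases hx : x ∈ S
    · rw [Multiset.count_eq_one_of_mem S.nodup hx]
      exact Multiset.one_le_count_iff_mem.mpr (hroots x hx)
    · rw [Multiset.count_eq_zero_of_notMem (by simpa using hx)]
      exact Nat.zero_le _
  have hcardval : Multiset.card S.val = n := hScard
  have hcards : Multiset.card P.roots ≤ Multiset.card S.val := by
    rw [hcardval]
    exact le_trans P.card_roots' (le_of_eq hdeg)
  have hSroots : S.val = P.roots := Multiset.eq_of_le_of_card_le hle hcards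
  have hsplits : P.Splits :=
    Polynomial.splits_iff_card_roots.mpr (by rw [← hSroots, hcardval, hdeg])
  refine ⟨S, hScard, hSIoo, ?_⟩
  rw [hsplits.roots_map, ← hSroots]
  simp [Complex.coe_algebraMap]
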